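/- Assume every numerical semigroup T with e(T) ≥ m(T)/3 satisfies Wilf's conjecture. Let G be a positive integer and S a numerical semigroup of genus g ≤ G with c(S) > m(S) and e(S) ≥ m(S)/3 + (G − g). Then every descendant T of S with genus g(T) ≤ G satisfies Wilf's conjecture. -/

import Mathlib

/-- A numerical semigroup: a cofinite submonoid of ℕ. -/
def IsNumericalSemigroup (S : Set ℕ) : Prop :=
  0 ∈ S ∧ (∀ a ∈ S, ∀ b ∈ S, a + b ∈ S) ∧ Sᶜ.Finite

/-- A primitive element: a nonzero element of `S` not a sum of two nonzero elements of `S`. -/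
def IsPrimitive (S : Set ℕ) (a : ℕ) : Prop :=
  a ∈ S ∧ a ≠ 0 ∧ ∀ x ∈ S, ∀ y ∈ S, x ≠ 0 → y ≠ 0 → x + y ≠ a

/-- Frobenius number: the largest gap (as a natural number; `0` for `S = ℕ`). -/
noncomputable def frob (S : Set ℕ) : ℕ := sSup Sᶜ

/-- Conductor `c = F + 1`. -/
noncomputable def nsCond (S : Set ℕ) : ℕ := frob S + 1

/-- Multiplicity: least nonzero element. -/
noncomputable def mult (S : Set ℕ) : ℕ := sInf {n | n ∈ S ∧ n ≠ 0}

/-- Genus: number of gaps. -/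
noncomputable def genus (S : Set ℕ) : ℕ := Sᶜ.ncard

/-- Left part `L(S) = {s ∈ S | s < F(S)}`. -/
def leftPart (S : Set ℕ) : Set ℕ := {s | s ∈ S ∧ s < frob S}

/-- The set of primitive elements. -/
def prims (S : Set ℕ) : Set ℕ := {a | IsPrimitive S a}

/-- Embedding dimension: number of primitive elements. -/
noncomputable def edim (S : Set ℕ) : ℕ := (prims S).ncard

/-- Number of left primitive elements. -/
noncomputable def eleft (S : Set ℕ) : ℕ := (prims S ∩ leftPart S).ncard

/-- Right primitive: primitive and greater than the Frobenius number. -/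
def IsRightPrimitive (S : Set ℕ) (a : ℕ) : Prop := IsPrimitive S a ∧ frob S < a

/-- Child in the tree of numerical semigroups. -/
def IsChild (S S' : Set ℕ) : Prop := ∃ a, IsRightPrimitive S a ∧ S' = S \ {a}

/-- Descendant (possibly equal): reachable by removing right primitive elements. -/
def IsDescendant (S T : Set ℕ) : Prop := Relation.ReflTransGen IsChild S T

/-- Wilf's conjecture for `S`. -/
def Wilf (S : Set ℕ) : Prop := nsCond S ≤ edim S * (leftPart S).ncard

/-- The ordinary semigroup `O_m = {0} ∪ (m + ℕ)`. -/
def ordinary (m : ℕ) : Set ℕ := {0} ∪ {n | m ≤ n}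

lemma mem_of_frob_lt {S : Set ℕ} (hS : IsNumericalSemigroup S) {n : ℕ} (h : frob S < n) :
    n ∈ S := by
  by_contra hn
  exact absurd (le_csSup hS.2.2.bddAbove hn) (not_le.mpr h)

lemma mult_mem {S : Set ℕ} (hS : IsNumericalSemigroup S) :
    mult S ∈ S ∧ mult S ≠ 0 := by
  have hne : {n | n ∈ S ∧ n ≠ 0}.Nonempty :=
    ⟨frob S + 1, mem_of_frob_lt hS (Nat.lt_succ_self _), Nat.succ_ne_zero _⟩
  exact Nat.sInf_mem hne

lemma prims_finite {S : Set ℕ} (hS : IsNumericalSemigroup S) : (prims S).Finite := by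
  apply Set.Finite.subset (Set.finite_Iic (frob S + mult S))
  intro p hp
  by_contra hgt
  simp only [Set.mem_Iic, not_le] at hgt
  obtain ⟨hm, hm0⟩ := mult_mem hS
  have h1 : p - mult S ∈ S := by
    apply mem_of_frob_lt hS
    omega
  have h2 : p - mult S ≠ 0 := by
    have : 0 < frob S + mult S := by omega
    omega
  exact hp.2.2 (mult S) hm (p - mult S) h1 hm0 h2 (by omega)

lemma child_step {T T' : Set ℕ} (hT : IsNumericalSemigroup T) (hm : mult T ≤ frob T)
    (h : IsChild T T') :
    IsNumericalSemigroup T' ∧ mult T' = mult T ∧ mult T' ≤ frob T' ∧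
      genus T' = genus T + 1 ∧ edim T ≤ edim T' + 1 := by
  obtain ⟨a, ⟨⟨haT, ha0, haprim⟩, hafrob⟩, rfl⟩ := h
  have hcompl : (T \ {a})ᶜ = insert a Tᶜ := by
    ext x; simp [Set.mem_compl_iff, Set.mem_diff]; tauto
  -- numerical semigroup
  have hns : IsNumericalSemigroup (T \ {a}) := by
    refine ⟨⟨hT.1, by simpa using ha0.symm⟩, ?_, ?_⟩
    · rintro x ⟨hx, hxa⟩ y ⟨hy, hya⟩
      refine ⟨hT.2.1 x hx y hy, ?_⟩
      simp only [Set.mem_singleton_iff]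
      rcases eq_or_ne x 0 with rfl | hx0
      · simpa using hya
      rcases eq_or_ne y 0 with rfl | hy0
      · simpa using hxa
      · exact haprim x hx y hy hx0 hy0
    · rw [hcompl]; exact hT.2.2.insert a
  -- frob T' = a
  have hfrob : frob (T \ {a}) = a := by
    have hbdd : BddAbove (T \ {a})ᶜ := hns.2.2.bddAbove
    refine le_antisymm (csSup_le ⟨a, by rw [hcompl]; simp⟩ ?_) (le_csSup hbdd (by rw [hcompl]; simp))
    intro x hx
    rw [hcompl] at hx
    rcases hx with rfl | hx
    · exact le_rfl
    · exact le_trans (le_csSup hT.2.2.bddAbove hx) hafrob.le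
  -- mult
  have hmult : mult (T \ {a}) = mult T := by
    obtain ⟨hmm, hm0⟩ := mult_mem hT
    have hmne : mult T ≠ a := by omega
    have hmem : mult T ∈ {n | n ∈ T \ {a} ∧ n ≠ 0} := ⟨⟨hmm, hmne⟩, hm0⟩
    refine le_antisymm (Nat.sInf_le hmem) ?_
    have hne : {n | n ∈ T \ {a} ∧ n ≠ 0}.Nonempty := ⟨_, hmem⟩
    have := Nat.sInf_mem hne
    exact Nat.sInf_le ⟨this.1.1, this.2⟩
  refine ⟨hns, hmult, by rw [hmult, hfrob]; omega, ?_, ?_⟩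
  -- genus
  · unfold genus
    rw [hcompl, Set.ncard_insert_of_notMem (by simpa using haT) hT.2.2]
  -- edim
  · have hsub : prims T \ {a} ⊆ prims (T \ {a}) := by
      rintro p ⟨⟨hp, hp0, hpprim⟩, hpa⟩
      refine ⟨⟨hp, by simpa using hpa⟩, hp0, ?_⟩
      rintro x ⟨hx, -⟩ y ⟨hy, -⟩ hx0 hy0
      exact hpprim x hx y hy hx0 hy0
    calc edim T ≤ (prims T \ {a}).ncard + 1 := by
          unfold edim
          by_cases ha : a ∈ prims T
          · rw [Set.ncard_diff_singleton_of_mem ha]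
            have : 0 < (prims T).ncard := (Set.ncard_pos (prims_finite hT)).mpr ⟨a, ha⟩
            omega
          · rw [Set.diff_singleton_eq_self ha]; omega
      _ ≤ edim (T \ {a}) + 1 := by
          have := Set.ncard_le_ncard hsub (prims_finite hns)
          unfold edim; omega

theorem stmt7
    (hyp : ∀ T : Set ℕ, IsNumericalSemigroup T → (edim T : ℚ) ≥ (mult T : ℚ) / 3 → Wilf T)
    (G : ℕ) (hG : 1 ≤ G) (S : Set ℕ) (hS : IsNumericalSemigroup S)
    (hg : genus S ≤ G) (hc : mult S < nsCond S)
    (he : (edim S : ℚ) ≥ (mult S : ℚ) / 3 + ((G : ℚ) - (genus S : ℚ))) :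
    ∀ T : Set ℕ, IsDescendant S T → genus T ≤ G → Wilf T := by
  intro T hdesc hgT
  have hmS : mult S ≤ frob S := by unfold nsCond at hc; omega
  have hInv : IsNumericalSemigroup T ∧ mult T = mult S ∧ mult T ≤ frob T ∧
      edim S + genus S ≤ edim T + genus T := by
    clear hgT
    induction hdesc with
    | refl => exact ⟨hS, rfl, hmS, le_rfl⟩
    | tail _ hchild ih =>
      obtain ⟨hns, hmult, hmf, hsum⟩ := ih
      obtain ⟨hns', hmult', hmf', hgen', hedim'⟩ := child_step hns hmf hchild
      exact ⟨hns', hmult'.trans hmult, hmf', by omega⟩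
  obtain ⟨hnsT, hmultT, -, hsum⟩ := hInv
  apply hyp T hnsT
  rw [hmultT]
  have h1 : (edim S : ℚ) + (genus S : ℚ) ≤ (edim T : ℚ) + (genus T : ℚ) := by
    exact_mod_cast hsum
  have h2 : (genus T : ℚ) ≤ (G : ℚ) := by exact_mod_cast hgT
  linarith
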